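/- For the time-coarsening intergrid operator 𝒵 (the stack of ν copies of I_n), the Galerkin coarse blocks satisfy 𝒵^T D 𝒵 = ν ψ_n − (ν−1) φ_n = I_n − (ν−1+θ) Δt A_n, and 𝒵^T C 𝒵 = −φ_n. Thus the Galerkin coarse time-grid system has the form of a one-step time integration scheme with the coarse time step ΔT = νΔt. -/

import Mathlib

open Matrix

lemma sum_succ_eq (ν : ℕ) (h : 1 ≤ ν) (c : ℝ) :
    ∑ k : Fin ν, ∑ l : Fin ν, (if (l:ℕ) + 1 = (k:ℕ) then c else 0)
      = ((ν : ℝ) - 1) * c := by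
  have hinner : ∀ k : Fin ν,
      (∑ l : Fin ν, (if (l:ℕ) + 1 = (k:ℕ) then c else 0))
        = if (k:ℕ) ≠ 0 then c else 0 := by
    intro k
    rcases Nat.eq_zero_or_pos (k:ℕ) with hk | hk
    · simp [hk]
    · rw [if_pos (by omega)]
      rw [Finset.sum_eq_single (⟨(k:ℕ) - 1, by omega⟩ : Fin ν)]
      · simp; omega
      · intro l _ hl
        rw [if_neg]
        intro hcontra
        apply hl
        apply Fin.ext
        simp
        omega
      · simp
  simp only [hinner]
  rw [Finset.sum_ite, Finset.sum_const, Finset.sum_const, smul_zero, add_zero,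
    nsmul_eq_mul]
  have hcard : (Finset.univ.filter fun k : Fin ν => (k:ℕ) ≠ 0).card = ν - 1 := by
    have h2 : (Finset.univ.filter fun k : Fin ν => ¬ (k:ℕ) ≠ 0).card = 1 := by
      have : (Finset.univ.filter fun k : Fin ν => ¬ (k:ℕ) ≠ 0)
          = {(⟨0, h⟩ : Fin ν)} := by
        ext k
        simp [Fin.ext_iff]
      rw [this]; simp
    have h3 := Finset.card_filter_add_card_filter_not
      (s := (Finset.univ : Finset (Fin ν))) (p := fun k : Fin ν => (k:ℕ) ≠ 0)
    simp only [Finset.card_univ, Fintype.card_fin] at h3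
    omega
  rw [hcard, Nat.cast_sub h]
  push_cast
  ring

/-- Time-coarsening Galerkin blocks: 𝒵ᵀ D 𝒵 = ν ψ − (ν−1) φ = I − (ν−1+θ) Δt A,
    and 𝒵ᵀ C 𝒵 = −φ. -/
theorem stmt_5 (n ν : ℕ) (hn : 1 ≤ n) (hν : 1 ≤ ν)
    (A : Matrix (Fin n) (Fin n) ℝ) (Δt θ : ℝ) (hΔt : 0 < Δt) (hθ : θ ∈ Set.Icc (0:ℝ) 1)
    (ψ φ : Matrix (Fin n) (Fin n) ℝ)
    (hψ : ψ = 1 - (θ * Δt) • A) (hφ : φ = 1 + ((1 - θ) * Δt) • A)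
    (D C : Matrix (Fin ν × Fin n) (Fin ν × Fin n) ℝ)
    (hD : ∀ (k l : Fin ν) (i j : Fin n),
      D (k, i) (l, j) =
        if k = l then ψ i j else if (l:ℕ) + 1 = (k:ℕ) then -φ i j else 0)
    (hC : ∀ (k l : Fin ν) (i j : Fin n),
      C (k, i) (l, j) = if (k:ℕ) = 0 ∧ (l:ℕ) = ν - 1 then -φ i j else 0)
    (𝒵 : Matrix (Fin ν × Fin n) (Fin n) ℝ)
    (h𝒵 : ∀ (k : Fin ν) (i j : Fin n), 𝒵 (k, i) j = if i = j then 1 else 0) :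
    𝒵ᵀ * D * 𝒵 = (ν : ℝ) • ψ - ((ν : ℝ) - 1) • φ ∧
    𝒵ᵀ * D * 𝒵 = 1 - (((ν : ℝ) - 1 + θ) * Δt) • A ∧
    𝒵ᵀ * C * 𝒵 = -φ := by
  have key : ∀ (M : Matrix (Fin ν × Fin n) (Fin ν × Fin n) ℝ) (i j : Fin n),
      (𝒵ᵀ * M * 𝒵) i j = ∑ k : Fin ν, ∑ l : Fin ν, M (k, i) (l, j) := by
    intro M i j
    simp only [mul_apply, transpose_apply, Fintype.sum_prod_type, h𝒵,
      ite_mul, one_mul, zero_mul, mul_ite, mul_one, mul_zero]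
    rw [Finset.sum_comm]
    simp [Finset.sum_ite_eq']
    exact Finset.sum_comm
  have hDZ : 𝒵ᵀ * D * 𝒵 = (ν : ℝ) • ψ - ((ν : ℝ) - 1) • φ := by
    ext i j
    rw [key]
    have : ∀ k l : Fin ν, D (k, i) (l, j)
        = (if k = l then ψ i j else 0) + (if (l:ℕ) + 1 = (k:ℕ) then -φ i j else 0) := by
      intro k l
      rw [hD]
      by_cases h1 : k = l
      · subst h1
        simp
      · simp [h1]
    simp only [this, Finset.sum_add_distrib]
    rw [sum_succ_eq ν hν]
    have : ∑ k : Fin ν, ∑ l : Fin ν, (if k = l then ψ i j else 0) = (ν : ℝ) * ψ i j := by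
      simp [Finset.sum_ite_eq', Finset.mul_sum]
    rw [this]
    simp [Matrix.sub_apply, Matrix.smul_apply]
    ring
  refine ⟨hDZ, ?_, ?_⟩
  · rw [hDZ, hψ, hφ]
    ext i j
    simp [Matrix.add_apply, Matrix.sub_apply, Matrix.smul_apply, Matrix.one_apply]
    by_cases h : i = j <;> simp [h] <;> ring
  · ext i j
    rw [key]
    have : ∀ k l : Fin ν, C (k, i) (l, j)
        = if k = (⟨0, hν⟩ : Fin ν) then (if l = (⟨ν - 1, by omega⟩ : Fin ν) then -φ i j else 0) else 0 := by
      intro k l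
      rw [hC]
      rcases eq_or_ne (k:ℕ) 0 with h1 | h1 <;> rcases eq_or_ne (l:ℕ) (ν-1) with h2 | h2 <;>
        simp [h1, h2, Fin.ext_iff]
    simp [this, Finset.sum_ite_eq']
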